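/- A conic idempotent residuated lattice A is conjunctive (satisfies γ(x ∧ y) = γ(x) ∧ γ(y), where γ(x) = x^{ℓr} ∧ x^{rℓ}) if and only if every block γ⁻¹(a), for a in the image of γ, is closed under binary meet (i.e., γ(x) = γ(y) implies γ(x ∧ y) = γ(x)). -/
import Mathlib


/-- `γ(x) = x^{ℓr} ∧ x^{rℓ}` where `x^ℓ = 1/x = rd 1 x` and `x^r = x\1 = ld x 1`. -/
def gam {A : Type*} [Lattice A] [One A] (ld rd : A → A → A) (x : A) : A :=
  ld (rd 1 x) 1 ⊓ rd 1 (ld x 1)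

/-- A conic idempotent residuated lattice is conjunctive
(`γ(x ∧ y) = γ(x) ∧ γ(y)`) iff every block `γ⁻¹(a)` is closed under binary meet. -/
theorem stmt19 {A : Type*} [Lattice A] [Monoid A]
    (ld rd : A → A → A)
    (resl : ∀ x y z : A, x * y ≤ z ↔ y ≤ ld x z)
    (resr : ∀ x y z : A, x * y ≤ z ↔ x ≤ rd z y)
    (conic : ∀ a : A, a ≤ 1 ∨ 1 ≤ a)
    (idem : ∀ x : A, x * x = x) :
    (∀ x y : A, gam ld rd (x ⊓ y) = gam ld rd x ⊓ gam ld rd y) ↔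
    (∀ x y : A, gam ld rd x = gam ld rd y → gam ld rd (x ⊓ y) = gam ld rd x) := by
  -- multiplication is monotone in each argument
  have mull : ∀ {a b : A} (c : A), a ≤ b → c * a ≤ c * b := by
    intro a b c h
    exact (resl c a (c * b)).mpr (h.trans ((resl c b (c * b)).mp le_rfl))
  have mulr : ∀ {a b : A} (c : A), a ≤ b → a * c ≤ b * c := by
    intro a b c h
    exact (resr a c (b * c)).mpr (h.trans ((resr b c (b * c)).mp le_rfl))
  -- basic residuation facts
  have hL : ∀ x : A, rd 1 x * x ≤ 1 := fun x => (resr _ _ _).mpr le_rfl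
  have hR : ∀ x : A, x * ld x 1 ≤ 1 := fun x => (resl _ _ _).mpr le_rfl
  have leRL : ∀ x : A, x ≤ ld (rd 1 x) 1 := fun x => (resl _ _ _).mp (hL x)
  have leLR : ∀ x : A, x ≤ rd 1 (ld x 1) := fun x => (resr _ _ _).mp (hR x)
  have Lanti : ∀ {x y : A}, x ≤ y → rd 1 y ≤ rd 1 x := by
    intro x y h
    exact (resr _ _ _).mp ((mull _ h).trans (hL y))
  have Ranti : ∀ {x y : A}, x ≤ y → ld y 1 ≤ ld x 1 := by
    intro x y h
    exact (resl _ _ _).mp ((mulr _ h).trans (hR y))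
  -- γ is monotone
  have gmono : ∀ {x y : A}, x ≤ y → gam ld rd x ≤ gam ld rd y := by
    intro x y h
    exact inf_le_inf (Ranti (Lanti h)) (Lanti (Ranti h))
  -- if x ≤ γ y then γ x ≤ γ y
  have gle : ∀ {x y : A}, x ≤ gam ld rd y → gam ld rd x ≤ gam ld rd y := by
    intro x y h
    have h1 : x ≤ ld (rd 1 y) 1 := h.trans inf_le_left
    have h2 : x ≤ rd 1 (ld y 1) := h.trans inf_le_right
    have hL1 : rd 1 y ≤ rd 1 x := (leLR (rd 1 y)).trans (Lanti h1)
    have hR1 : ld y 1 ≤ ld x 1 := (leRL (ld y 1)).trans (Ranti h2)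
    exact inf_le_inf (Ranti hL1) (Lanti hR1)
  -- key lemma: if ¬ y ≤ x and x*y = y*x then x ≤ γ y
  have key : ∀ {x y : A}, ¬ y ≤ x → x * y = y * x → x ≤ gam ld rd y := by
    intro x y hyx hc
    have p1 : rd 1 y * x ≤ 1 := by
      rcases conic (rd 1 y * x) with h | h
      · exact h
      · exfalso; apply hyx
        calc y = 1 * y := (one_mul y).symm
          _ ≤ (rd 1 y * x) * y := mulr y h
          _ = rd 1 y * (y * x) := by rw [mul_assoc, hc]
          _ = (rd 1 y * y) * x := by rw [mul_assoc]
          _ ≤ 1 * x := mulr x (hL y)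
          _ = x := one_mul x
    have p2 : x * ld y 1 ≤ 1 := by
      rcases conic (x * ld y 1) with h | h
      · exact h
      · exfalso; apply hyx
        calc y = y * 1 := (mul_one y).symm
          _ ≤ y * (x * ld y 1) := mull y h
          _ = (x * y) * ld y 1 := by rw [← mul_assoc, hc]
          _ = x * (y * ld y 1) := by rw [mul_assoc]
          _ ≤ x * 1 := mull x (hR y)
          _ = x := mul_one x
    exact le_inf ((resl _ _ _).mp p1) ((resr _ _ _).mp p2)
  -- commutativity for elements on the same side of 1
  have commneg : ∀ {x y : A}, x ≤ 1 → y ≤ 1 → x * y = y * x := by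
    intro x y hx hy
    have e : ∀ {u v : A}, u ≤ 1 → v ≤ 1 → u * v = u ⊓ v := by
      intro u v hu hv
      apply le_antisymm
      · exact le_inf (le_of_le_of_eq (mull u hv) (mul_one u))
          (le_of_le_of_eq (mulr v hu) (one_mul v))
      · calc u ⊓ v = (u ⊓ v) * (u ⊓ v) := (idem _).symm
          _ ≤ u * v := le_trans (mulr _ inf_le_left) (mull u inf_le_right)
    rw [e hx hy, e hy hx, inf_comm]
  have commpos : ∀ {x y : A}, 1 ≤ x → 1 ≤ y → x * y = y * x := by
    intro x y hx hy
    have e : ∀ {u v : A}, 1 ≤ u → 1 ≤ v → u * v = u ⊔ v := by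
      intro u v hu hv
      apply le_antisymm
      · calc u * v ≤ (u ⊔ v) * (u ⊔ v) :=
              le_trans (mulr v le_sup_left) (mull _ le_sup_right)
          _ = u ⊔ v := idem _
      · exact sup_le (le_of_eq_of_le (mul_one u).symm (mull u hv))
          (le_of_eq_of_le (one_mul v).symm (mulr v hu))
    rw [e hx hy, e hy hx, sup_comm]
  constructor
  · intro h x y hxy
    rw [h, hxy, inf_idem]
  · intro H x y
    by_cases hxy : x ≤ y
    · rw [inf_eq_left.mpr hxy, inf_eq_left.mpr (gmono hxy)]
    · by_cases hyx : y ≤ x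
      · rw [inf_eq_right.mpr hyx, inf_eq_right.mpr (gmono hyx)]
      · -- incomparable: both on the same side of 1, hence they commute
        have hc : x * y = y * x := by
          rcases conic x with hx | hx <;> rcases conic y with hy | hy
          · exact commneg hx hy
          · exact absurd (hx.trans hy) hxy
          · exact absurd (hy.trans hx) hyx
          · exact commpos hx hy
        have e : gam ld rd x = gam ld rd y :=
          le_antisymm (gle (key hyx hc)) (gle (key hxy hc.symm))
        rw [H x y e, e, inf_idem]
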